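/- arXiv:2007.15418 — 2 statements merged into one kernel-verified Lean document; each statement's English description precedes it below -/
import Mathlib

section
/- (Recursion identity for the MomentumQ tabular algorithm.) Let Q_0 be given, Q_1 = 𝒟_0[Q_0, Q_{-1}] (where by convention Q_{-1}=Q_0 and 𝒟_0 reduces to the empirical Bellman update), and for k ≥ 1 define Q_{k+1} = (1 − a_k)Q_k + [b_k(1−a_k)+c_k](Q_k − Q_{k-1}) + a_k 𝒟_k[Q_k, Q_{k-1}] with a_k = 1/(k+1), b_k = k−m−1, c_k = (−k² + (m+1)k + 1)/(k+1), where 𝒟_k[Q_k,Q_{k-1}] = (1+b_k)𝒯Q_k − b_k 𝒯Q_{k-1} − ε_k for an operator 𝒯 and error terms ε_k, and E_k = ∑_{j=0}^k ε_j. Then for all k ≥ 1, Q_k = (1/k)(Q_{k-1} − Q_0 + (k−m−1)𝒯Q_{k-1}) + (1/k)((m+1)𝒯Q_0 − E_{k-1}). -/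
theorem stmt_13 (V : Type*) [AddCommGroup V] [Module ℝ V]
    (Q : ℕ → V) (T : V → V) (ε : ℕ → V) (m : ℝ)
    (a b c : ℕ → ℝ)
    (ha : ∀ k, a k = 1 / ((k : ℝ) + 1))
    (hb : ∀ k, b k = (k : ℝ) - m - 1)
    (hc : ∀ k, c k = (-(k : ℝ) ^ 2 + (m + 1) * k + 1) / ((k : ℝ) + 1))
    (hQ1 : Q 1 = T (Q 0) - ε 0)
    (hrec : ∀ k : ℕ, 1 ≤ k →
      Q (k + 1) = (1 - a k) • Q k + (b k * (1 - a k) + c k) • (Q k - Q (k - 1)) +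
        a k • ((1 + b k) • T (Q k) - b k • T (Q (k - 1)) - ε k)) :
    ∀ k : ℕ, 1 ≤ k →
      Q k = ((k : ℝ))⁻¹ • (Q (k - 1) - Q 0 + ((k : ℝ) - m - 1) • T (Q (k - 1)) +
        (m + 1) • T (Q 0) - ∑ j ∈ Finset.range k, ε j) := by
  intro k hk
  induction k, hk using Nat.le_induction with
  | base =>
    simp only [Nat.cast_one, inv_one, one_smul, Finset.sum_range_one, hQ1]
    module
  | succ k hk ih =>
    have hk0 : (k : ℝ) ≠ 0 := by
      have : (1 : ℝ) ≤ (k : ℝ) := by exact_mod_cast hk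
      linarith
    have hk1 : (k : ℝ) + 1 ≠ 0 := by positivity
    have h2 : (k : ℝ) • Q k = Q (k-1) - Q 0 + ((k:ℝ) - m - 1) • T (Q (k-1)) +
        (m+1) • T (Q 0) - ∑ j ∈ Finset.range k, ε j := by
      rw [ih, smul_smul, mul_inv_cancel₀ hk0, one_smul]
    have hS : ∑ j ∈ Finset.range k, ε j = Q (k-1) - Q 0 + ((k:ℝ) - m - 1) • T (Q (k-1)) +
        (m+1) • T (Q 0) - (k : ℝ) • Q k := by
      rw [eq_sub_iff_add_eq, h2]; abel
    rw [hrec k hk, ha, hb, hc]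
    simp only [Nat.add_sub_cancel, Finset.sum_range_succ, hS, Nat.cast_add, Nat.cast_one]
    match_scalars <;> field_simp <;> ring
end

section
/- (Boundedness of the empirical Bellman combination.) With b_k = k − m − 1 and a_{k-1} = 1/k, and under ‖Q_k‖ ≤ V_max for all k, ‖R‖ ≤ R_max, γ ∈ (0,1), the quantities D_k := (1+b_k)𝒯̂_k Q_k − b_k 𝒯̂_k Q_{k-1}, where 𝒯̂_k Q = R + γ·(max over actions of Q at a sampled next state), satisfy the recursive bound ‖D_k‖ ≤ R_max + 2γ V_max + γ‖D_{k-1}‖ for all k ≥ m/2, and hence sup_k ‖D_k‖ < ∞. -/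
private lemma abs_sup'_le {ι : Type*} (s : Finset ι) (hs : s.Nonempty) (f : ι → ℝ) (c : ℝ)
    (h : ∀ i ∈ s, |f i| ≤ c) : |s.sup' hs f| ≤ c := by
  obtain ⟨i0, hi0⟩ := hs
  refine abs_le.mpr ⟨?_, Finset.sup'_le _ _ fun i hi => (abs_le.mp (h i hi)).2⟩
  exact le_trans (abs_le.mp (h i0 hi0)).1 (Finset.le_sup' f hi0)

private lemma abs_sup'_sub_sup'_le {ι : Type*} (s : Finset ι) (hs : s.Nonempty)
    (f g : ι → ℝ) (c : ℝ) (h : ∀ i ∈ s, |f i - g i| ≤ c) :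
    |s.sup' hs f - s.sup' hs g| ≤ c := by
  refine abs_le.mpr ⟨?_, ?_⟩
  · have : s.sup' hs g ≤ s.sup' hs f + c := by
      refine Finset.sup'_le _ _ fun i hi => ?_
      have := (abs_le.mp (h i hi)).1
      have := Finset.le_sup' f hi
      linarith
    linarith
  · have : s.sup' hs f ≤ s.sup' hs g + c := by
      refine Finset.sup'_le _ _ fun i hi => ?_
      have := (abs_le.mp (h i hi)).2
      have := Finset.le_sup' g hi
      linarith
    linarith

theorem stmt_15 (X U : Type*) [Fintype X] [Fintype U] [Nonempty X] [Nonempty U]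
    (Q : ℕ → (X → U → ℝ)) (R : X → U → ℝ) (y : ℕ → X → U → X)
    (γ m Vmax Rmax : ℝ) (hγ : γ ∈ Set.Ioo (0:ℝ) 1) (hm : 1 / γ ≤ m)
    (hQbd : ∀ k, ‖Q k‖ ≤ Vmax) (hRbd : ‖R‖ ≤ Rmax)
    (That : ℕ → (X → U → ℝ) → (X → U → ℝ))
    (hThat : ∀ k Q', That k Q' = fun x u =>
      R x u + γ * (Finset.univ.sup' Finset.univ_nonempty (fun u' => Q' (y k x u) u')))
    (D : ℕ → (X → U → ℝ))
    (hD : ∀ k, D k = ((k : ℝ) - m) • That k (Q k) - ((k : ℝ) - m - 1) • That k (Q (k - 1)))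
    (hrec : ∀ k : ℕ, 1 ≤ k →
      Q k = Q (k - 1) - ((k : ℝ))⁻¹ • Q (k - 2) + ((k : ℝ))⁻¹ • D (k - 1)) :
    (∀ k : ℕ, 1 ≤ k → m / 2 ≤ (k : ℝ) →
      ‖D k‖ ≤ Rmax + 2 * γ * Vmax + γ * ‖D (k - 1)‖) ∧
      ∃ C : ℝ, ∀ k, ‖D k‖ ≤ C := by
  obtain ⟨hγ0, hγ1⟩ := hγ
  have hV0 : 0 ≤ Vmax := le_trans (norm_nonneg _) (hQbd 0)
  have hR0 : 0 ≤ Rmax := le_trans (norm_nonneg _) hRbd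
  have hm0 : 0 < m := lt_of_lt_of_le (by positivity) hm
  -- pointwise bound for Q values
  have hQpt : ∀ k (x : X) (u : U), |Q k x u| ≤ Vmax := by
    intro k x u
    calc |Q k x u| = ‖Q k x u‖ := rfl
      _ ≤ ‖Q k x‖ := norm_le_pi_norm (Q k x) u
      _ ≤ ‖Q k‖ := norm_le_pi_norm (Q k) x
      _ ≤ Vmax := hQbd k
  have hRpt : ∀ (x : X) (u : U), |R x u| ≤ Rmax := by
    intro x u
    calc |R x u| = ‖R x u‖ := rfl
      _ ≤ ‖R x‖ := norm_le_pi_norm (R x) u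
      _ ≤ ‖R‖ := norm_le_pi_norm R x
      _ ≤ Rmax := hRbd
  have key : ∀ k : ℕ, 1 ≤ k → m / 2 ≤ (k : ℝ) →
      ‖D k‖ ≤ Rmax + 2 * γ * Vmax + γ * ‖D (k - 1)‖ := by
    intro k hk hk2
    have hkpos : (0:ℝ) < (k:ℝ) := by exact_mod_cast Nat.lt_of_lt_of_le Nat.zero_lt_one hk
    -- difference bound
    have hqdiff : Q k - Q (k-1) = ((k:ℝ))⁻¹ • (D (k-1) - Q (k-2)) := by
      rw [smul_sub, hrec k hk]; abel
    have hdiffnorm : ‖Q k - Q (k-1)‖ ≤ ((k:ℝ))⁻¹ * (‖D (k-1)‖ + Vmax) := by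
      rw [hqdiff, norm_smul]
      have h1 : ‖((k:ℝ))⁻¹‖ = ((k:ℝ))⁻¹ := by
        rw [Real.norm_eq_abs, abs_of_pos (by positivity)]
      rw [h1]
      have h2 : ‖D (k-1) - Q (k-2)‖ ≤ ‖D (k-1)‖ + Vmax :=
        (norm_sub_le _ _).trans (by linarith [hQbd (k-2)])
      exact mul_le_mul_of_nonneg_left h2 (by positivity)
    have hdiffpt : ∀ (x : X) (u : U), |Q k x u - Q (k-1) x u| ≤ ((k:ℝ))⁻¹ * (‖D (k-1)‖ + Vmax) := by
      intro x u
      calc |Q k x u - Q (k-1) x u| = ‖(Q k - Q (k-1)) x u‖ := by simp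
        _ ≤ ‖(Q k - Q (k-1)) x‖ := norm_le_pi_norm _ u
        _ ≤ ‖Q k - Q (k-1)‖ := norm_le_pi_norm _ x
        _ ≤ _ := hdiffnorm
    have hkm : |(k:ℝ) - m| ≤ (k:ℝ) := abs_le.mpr ⟨by linarith, by linarith⟩
    have hC : (0:ℝ) ≤ Rmax + 2 * γ * Vmax + γ * ‖D (k-1)‖ := by positivity
    rw [pi_norm_le_iff_of_nonneg hC]
    intro x
    rw [pi_norm_le_iff_of_nonneg hC]
    intro u
    set a : ℝ := Finset.univ.sup' Finset.univ_nonempty (fun u' => Q k (y k x u) u') with ha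
    set b : ℝ := Finset.univ.sup' Finset.univ_nonempty (fun u' => Q (k-1) (y k x u) u') with hb
    have habs_a : |b| ≤ Vmax := abs_sup'_le _ _ _ _ (fun i _ => hQpt (k-1) _ i)
    have habs_ab : |a - b| ≤ ((k:ℝ))⁻¹ * (‖D (k-1)‖ + Vmax) :=
      abs_sup'_sub_sup'_le _ _ _ _ _ (fun i _ => hdiffpt _ i)
    have hDval : D k x u = R x u + γ * (b + ((k:ℝ) - m) * (a - b)) := by
      rw [hD k]
      simp only [Pi.sub_apply, Pi.smul_apply, smul_eq_mul, hThat]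
      rw [← ha, ← hb]
      ring
    rw [hDval, Real.norm_eq_abs]
    have h1 : |(k:ℝ) - m| * |a - b| ≤ ‖D (k-1)‖ + Vmax := by
      calc |(k:ℝ) - m| * |a - b| ≤ (k:ℝ) * (((k:ℝ))⁻¹ * (‖D (k-1)‖ + Vmax)) :=
            mul_le_mul hkm habs_ab (abs_nonneg _) hkpos.le
        _ = (‖D (k-1)‖ + Vmax) := by
            rw [← mul_assoc, mul_inv_cancel₀ (ne_of_gt hkpos), one_mul]
    have h2 : |b + ((k:ℝ) - m) * (a - b)| ≤ Vmax + (‖D (k-1)‖ + Vmax) := by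
      calc |b + ((k:ℝ) - m) * (a - b)| ≤ |b| + |((k:ℝ) - m) * (a - b)| := abs_add_le _ _
        _ = |b| + |(k:ℝ) - m| * |a - b| := by rw [abs_mul]
        _ ≤ Vmax + (‖D (k-1)‖ + Vmax) := by linarith
    have h3 : |R x u + γ * (b + ((k:ℝ) - m) * (a - b))| ≤
        |R x u| + γ * |b + ((k:ℝ) - m) * (a - b)| := by
      calc _ ≤ |R x u| + |γ * (b + ((k:ℝ) - m) * (a - b))| := abs_add_le _ _
        _ = |R x u| + γ * |b + ((k:ℝ) - m) * (a - b)| := by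
            rw [abs_mul, abs_of_pos hγ0]
    have h4 : γ * |b + ((k:ℝ) - m) * (a - b)| ≤ γ * (Vmax + (‖D (k-1)‖ + Vmax)) :=
      mul_le_mul_of_nonneg_left h2 hγ0.le
    have h5 := hRpt x u
    linarith
  refine ⟨key, ?_⟩
  set N : ℕ := ⌈m / 2⌉₊ + 1 with hN
  have hNm : m / 2 ≤ (N : ℝ) := by
    have := Nat.le_ceil (m / 2)
    push_cast [hN]
    linarith
  have hne : (Finset.range (N + 1)).Nonempty := ⟨0, by simp⟩
  set C0 : ℝ := (Finset.range (N + 1)).sup' hne (fun k => ‖D k‖) with hC0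
  have hC0nn : 0 ≤ C0 := le_trans (norm_nonneg (D 0))
    (Finset.le_sup' (fun k => ‖D k‖) (show 0 ∈ Finset.range (N + 1) from Finset.mem_range.mpr (by omega)))
  have hC0le : ∀ k ≤ N, ‖D k‖ ≤ C0 := by
    intro k hk
    exact Finset.le_sup' (fun k => ‖D k‖) (Finset.mem_range.mpr (by omega))
  set B : ℝ := Rmax + 2 * γ * Vmax with hB
  have hBnn : 0 ≤ B := by positivity
  have h1γ : 0 < 1 - γ := by linarith
  refine ⟨B / (1 - γ) + C0, ?_⟩
  have hCbig : C0 ≤ B / (1 - γ) + C0 := by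
    have : 0 ≤ B / (1 - γ) := div_nonneg hBnn h1γ.le
    linarith
  intro k
  induction k with
  | zero => exact le_trans (hC0le 0 (by omega)) hCbig
  | succ n ih =>
    by_cases h : n + 1 ≤ N
    · exact le_trans (hC0le (n + 1) h) hCbig
    · have hge : m / 2 ≤ ((n + 1 : ℕ) : ℝ) := by
        have : (N : ℝ) ≤ ((n + 1 : ℕ) : ℝ) := by exact_mod_cast Nat.le_of_lt (by omega)
        linarith
      have hk := key (n + 1) (by omega) hge
      simp only [Nat.add_sub_cancel] at hk
      have hstep : B + γ * ‖D n‖ ≤ B / (1 - γ) + C0 := by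
        have h6 : γ * ‖D n‖ ≤ γ * (B / (1 - γ) + C0) := mul_le_mul_of_nonneg_left ih hγ0.le
        have h7 : B / (1 - γ) * (1 - γ) = B := div_mul_cancel₀ _ (ne_of_gt h1γ)
        nlinarith [mul_nonneg hγ0.le hC0nn]
      calc ‖D (n + 1)‖ ≤ B + γ * ‖D n‖ := by rw [hB]; exact hk
        _ ≤ _ := hstep
end
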